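/- Let k ≥ 3 and λ ∈ ℂ. The map sending [y_1 : … : y_k : y_{k+1}] to ([y_1 : … : y_k], [y_{k+1} : y_1+…+y_k]) defines a bijection between the open subset of the hypersurface Y = {(Σ_{i=1}^{k+1} y_i)^{k+1} = (k+1)^{k+1} λ^{k+1} ∏_{i=1}^{k+1} y_i} ⊂ ℙ^k where y_{k+1} ≠ 0 or y_1+…+y_k ≠ 0, minus the locus {y_1+…+y_k = 0}, and the open subset of I = {([y_1:…:y_k],[a:b]) ∈ ℙ^{k−1}×ℙ^1 : (y_1+…+y_k)^k (b+a)^{k+1} = (k+1)^{k+1} λ^{k+1} a b^k y_1⋯y_k} where b ≠ 0, with inverse ([y_1:…:y_k],[a:b]) ↦ [y_1 : … : y_k : (a/b)(y_1+…+y_k)]. -/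

import Mathlib

/-- Equation of `Y = {(∑ y_i)^{k+1} = (k+1)^{k+1} λ^{k+1} ∏ y_i} ⊂ ℙ^k`
in homogeneous coordinates. -/
def eqY (k : ℕ) (lam : ℂ) (y : Fin (k + 1) → ℂ) : Prop :=
  (∑ i, y i) ^ (k + 1) = (k + 1) ^ (k + 1) * lam ^ (k + 1) * ∏ i, y i

/-- Equation of `I ⊂ ℙ^{k-1} × ℙ^1`:
`(y_1+…+y_k)^k (b+a)^{k+1} = (k+1)^{k+1} λ^{k+1} a b^k y_1⋯y_k`. -/
def eqI (k : ℕ) (lam : ℂ) (z : Fin k → ℂ) (a b : ℂ) : Prop :=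
  (∑ i, z i) ^ k * (b + a) ^ (k + 1) = (k + 1) ^ (k + 1) * lam ^ (k + 1) * a * b ^ k * ∏ i, z i

/-- the map `[y_1:…:y_{k+1}] ↦ ([y_1:…:y_k],[y_{k+1} : y_1+…+y_k])` gives a
bijection between the open part of `Y` where `y_1+…+y_k ≠ 0` and the open part of `I` where
`b ≠ 0`, with inverse `([y_1:…:y_k],[a:b]) ↦ [y_1:…:y_k:(a/b)(y_1+…+y_k)]`: the two maps are
well defined and mutually inverse (up to the projective scaling on the `ℙ^1` factor). -/
theorem dwork_quotient_fibration_birational (k : ℕ) (hk : 3 ≤ k) (lam : ℂ) :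
    (∀ y : Fin (k + 1) → ℂ, y ≠ 0 → eqY k lam y → (∑ i : Fin k, y i.castSucc) ≠ 0 →
      eqI k lam (fun i => y i.castSucc) (y (Fin.last k)) (∑ i : Fin k, y i.castSucc)) ∧
    (∀ (z : Fin k → ℂ) (a b : ℂ), z ≠ 0 → b ≠ 0 → eqI k lam z a b →
      eqY k lam (Fin.snoc z (a / b * ∑ i, z i))) ∧
    (∀ y : Fin (k + 1) → ℂ, eqY k lam y → (∑ i : Fin k, y i.castSucc) ≠ 0 →
      Fin.snoc (fun i : Fin k => y i.castSucc)
        (y (Fin.last k) / (∑ i : Fin k, y i.castSucc) * ∑ i : Fin k, y i.castSucc) = y) ∧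
    (∀ (z : Fin k → ℂ) (a b : ℂ), b ≠ 0 → (∑ i, z i) ≠ 0 →
      ((fun i : Fin k => (Fin.snoc z (a / b * ∑ i, z i) : Fin (k + 1) → ℂ) i.castSucc) = z ∧
        ∃ c : ℂ, c ≠ 0 ∧
          (Fin.snoc z (a / b * ∑ i, z i) : Fin (k + 1) → ℂ) (Fin.last k) = c * a ∧
          (∑ i : Fin k,
            (Fin.snoc z (a / b * ∑ i, z i) : Fin (k + 1) → ℂ) i.castSucc) = c * b)) := by
  refine ⟨?_, ?_, ?_, ?_⟩
  · intro y hy hY hS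
    unfold eqY at hY
    unfold eqI
    rw [Fin.sum_univ_castSucc, Fin.prod_univ_castSucc] at hY
    linear_combination (∑ i : Fin k, y i.castSucc) ^ k * hY
  · intro z a b hz hb hI
    unfold eqI at hI
    unfold eqY
    rw [Fin.sum_univ_castSucc, Fin.prod_univ_castSucc]
    simp only [Fin.snoc_castSucc, Fin.snoc_last]
    have h1 : (∑ i, z i) + a / b * ∑ i, z i = (∑ i, z i) * (b + a) / b := by
      field_simp
    rw [h1, div_pow, mul_pow]
    field_simp
    linear_combination b * (∑ i, z i) * hI
  · intro y hY hS
    funext i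
    refine Fin.lastCases ?_ (fun j => ?_) i
    · simp [div_mul_cancel₀ _ hS]
    · simp
  · intro z a b hb hS
    refine ⟨funext fun i => Fin.snoc_castSucc _ _ _, (∑ i, z i) / b,
      div_ne_zero hS hb, ?_, ?_⟩
    · simp only [Fin.snoc_last]; field_simp
    · simp only [Fin.snoc_castSucc]; field_simp
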